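/- Narrowing for algorithmic subtyping: if Γ₁, X<:Q, Γ₂ ⊢ M <: N and Γ₁ ⊢ P <: Q are derivable, then Γ₁, X<:P, Γ₂ ⊢ M <: N is derivable. -/

import Mathlib

inductive Ty where
  | var : ℕ → Ty
  | top : Ty
  | arrow : Ty → Ty → Ty
  | all : ℕ → Ty → Ty → Ty

abbrev Env := List (ℕ × Ty)

def freeVars : Ty → Finset ℕ
  | .var x => {x}
  | .top => ∅
  | .arrow a b => freeVars a ∪ freeVars b
  | .all x a b => freeVars a ∪ (freeVars b \ {x})

def boundVars (Γ : Env) : Finset ℕ := (Γ.map Prod.fst).toFinset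

/-- A type is well-scoped in Γ if all its free variables are bound in Γ. -/
def WellScoped (Γ : Env) (t : Ty) : Prop := freeVars t ⊆ boundVars Γ

/-- The original algorithmic subtyping system for F<:. -/
inductive Subty : Env → Ty → Ty → Prop where
  | top {Γ S} : WellScoped Γ S → Subty Γ S .top
  | refl {Γ X} : X ∈ boundVars Γ → Subty Γ (.var X) (.var X)
  | trans_tvar {Γ X U T} : (X, U) ∈ Γ → Subty Γ U T → Subty Γ (.var X) T
  | arrow {Γ S₁ S₂ T₁ T₂} : Subty Γ T₁ S₁ → Subty Γ S₂ T₂ →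
      Subty Γ (.arrow S₁ S₂) (.arrow T₁ T₂)
  | all {Γ X S₁ S₂ T₁ T₂} : Subty Γ T₁ S₁ → Subty ((X, T₁) :: Γ) S₂ T₂ →
      Subty Γ (.all X S₁ S₂) (.all X T₁ T₂)

lemma mem_boundVars {Γ : Env} {x : ℕ} : x ∈ boundVars Γ ↔ ∃ u, (x, u) ∈ Γ := by
  simp only [boundVars, List.mem_toFinset, List.mem_map]
  constructor
  · rintro ⟨⟨a, b⟩, hm, rfl⟩; exact ⟨b, hm⟩
  · rintro ⟨u, hu⟩; exact ⟨(x, u), hu, rfl⟩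

lemma boundVars_mono {Γ Γ' : Env} (h : ∀ p ∈ Γ, p ∈ Γ') :
    boundVars Γ ⊆ boundVars Γ' := by
  intro x hx
  rw [mem_boundVars] at hx ⊢
  obtain ⟨u, hu⟩ := hx
  exact ⟨u, h _ hu⟩

lemma boundVars_cons (x : ℕ) (t : Ty) (Γ : Env) :
    boundVars ((x, t) :: Γ) = insert x (boundVars Γ) := by
  simp [boundVars]

lemma subty_weaken {Γ Γ' : Env} {M N : Ty} (h : Subty Γ M N)
    (hsub : ∀ p ∈ Γ, p ∈ Γ') : Subty Γ' M N := by
  induction h generalizing Γ' with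
  | top hws => exact .top (hws.trans (boundVars_mono hsub))
  | refl hx => exact .refl (boundVars_mono hsub hx)
  | trans_tvar hm _ ih => exact .trans_tvar (hsub _ hm) (ih hsub)
  | arrow _ _ ih1 ih2 => exact .arrow (ih1 hsub) (ih2 hsub)
  | all _ _ ih1 ih2 =>
      refine .all (ih1 hsub) (ih2 ?_)
      intro p hp
      rw [List.mem_cons] at hp ⊢
      rcases hp with h | h
      · exact Or.inl h
      · exact Or.inr (hsub _ h)

lemma subty_ws {Γ : Env} {M N : Ty} (h : Subty Γ M N) :
    WellScoped Γ M ∧ WellScoped Γ N := by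
  induction h with
  | top hws => exact ⟨hws, by simp [WellScoped, freeVars]⟩
  | @refl _ X hx =>
      constructor <;> · simp only [WellScoped, freeVars, Finset.singleton_subset_iff]; exact hx
  | @trans_tvar _ X U T hm _ ih =>
      refine ⟨?_, ih.2⟩
      simp only [WellScoped, freeVars, Finset.singleton_subset_iff]
      exact mem_boundVars.mpr ⟨_, hm⟩
  | arrow _ _ ih1 ih2 =>
      constructor <;> simp only [WellScoped, freeVars, Finset.union_subset_iff]
      · exact ⟨ih1.2, ih2.1⟩
      · exact ⟨ih1.1, ih2.2⟩
  | @all Γ X S₁ S₂ T₁ T₂ _ _ ih1 ih2 =>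
      have hb : boundVars ((X, T₁) :: Γ) = insert X (boundVars Γ) := boundVars_cons _ _ _
      have hS₂ : freeVars S₂ \ {X} ⊆ boundVars Γ := by
        intro y hy
        rw [Finset.mem_sdiff, Finset.mem_singleton] at hy
        have := ih2.1 hy.1
        rw [hb, Finset.mem_insert] at this
        rcases this with h | h
        · exact absurd h hy.2
        · exact h
      have hT₂ : freeVars T₂ \ {X} ⊆ boundVars Γ := by
        intro y hy
        rw [Finset.mem_sdiff, Finset.mem_singleton] at hy
        have := ih2.2 hy.1
        rw [hb, Finset.mem_insert] at this
        rcases this with h | h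
        · exact absurd h hy.2
        · exact h
      constructor <;> simp only [WellScoped, freeVars, Finset.union_subset_iff]
      · exact ⟨ih1.2, hS₂⟩
      · exact ⟨ih1.1, hT₂⟩

def TransAt (Q : Ty) : Prop :=
  ∀ Γ M N, Subty Γ M Q → Subty Γ Q N → Subty Γ M N

def NarrowAt (Q : Ty) : Prop :=
  ∀ (Γ₁ Γ₂ : Env) (X : ℕ) (P M N : Ty),
    Subty (Γ₂ ++ (X, Q) :: Γ₁) M N → Subty Γ₁ P Q →
    Subty (Γ₂ ++ (X, P) :: Γ₁) M N

lemma boundVars_narrow (Γ₁ Γ₂ : Env) (X : ℕ) (P Q : Ty) :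
    boundVars (Γ₂ ++ (X, Q) :: Γ₁) = boundVars (Γ₂ ++ (X, P) :: Γ₁) := by
  simp [boundVars]

lemma narrow_of_trans (Q : Ty) (ht : TransAt Q) : NarrowAt Q := by
  intro Γ₁ Γ₂ X P M N h1 h2
  generalize hΓ : Γ₂ ++ (X, Q) :: Γ₁ = Γ at h1
  induction h1 generalizing Γ₂ with
  | top hws =>
      subst hΓ
      refine .top ?_
      unfold WellScoped
      rw [← boundVars_narrow Γ₁ Γ₂ X P Q]
      exact hws
  | refl hx =>
      subst hΓ
      refine .refl ?_
      rw [← boundVars_narrow Γ₁ Γ₂ X P Q]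
      exact hx
  | @trans_tvar _ Y U T hm _ ih =>
      subst hΓ
      have hU : Subty (Γ₂ ++ (X, P) :: Γ₁) U T := ih Γ₂ rfl
      rw [List.mem_append, List.mem_cons] at hm
      rcases hm with hm | hm | hm
      · exact .trans_tvar (by simp [hm]) hU
      · -- (Y, U) = (X, Q)
        rw [Prod.mk.injEq] at hm
        obtain ⟨rfl, rfl⟩ := hm
        have hP : Subty (Γ₂ ++ (Y, P) :: Γ₁) P U := by
          refine subty_weaken h2 ?_
          intro p hp; simp [hp]
        exact .trans_tvar (show (Y, P) ∈ Γ₂ ++ (Y, P) :: Γ₁ by simp) (ht _ _ _ hP hU)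
      · exact .trans_tvar (by simp [hm]) hU
  | arrow _ _ ih1 ih2 =>
      subst hΓ
      exact .arrow (ih1 Γ₂ rfl) (ih2 Γ₂ rfl)
  | @all _ Y S₁ S₂ T₁ T₂ _ _ ih1 ih2 =>
      subst hΓ
      exact .all (ih1 Γ₂ rfl) (ih2 ((Y, T₁) :: Γ₂) rfl)

lemma trans_step (Q : Ty)
    (ih : ∀ Q' : Ty, sizeOf Q' < sizeOf Q → TransAt Q') : TransAt Q := by
  intro Γ M N h1 h2
  induction h1 generalizing N with
  | top hws =>
      cases h2 with
      | top => exact .top hws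
  | refl hx => exact h2
  | trans_tvar hm _ ihd => exact .trans_tvar hm (ihd ih N h2)
  | @arrow Γ' S₁ S₂ T₁ T₂ ha hb _ _ =>
      cases h2 with
      | top => exact .top (subty_ws (.arrow ha hb)).1
      | arrow hc hd =>
          have h₁ : TransAt T₁ := ih T₁ (by simp; try omega)
          have h₂ : TransAt T₂ := ih T₂ (by simp; try omega)
          exact .arrow (h₁ _ _ _ hc ha) (h₂ _ _ _ hb hd)
  | @all Γ' Y S₁ S₂ Q₁ Q₂ ha hb _ _ =>
      cases h2 with
      | top => exact .top (subty_ws (.all ha hb)).1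
      | @all _ _ _ _ T₁ T₂ hc hd =>
          have h₁ : TransAt Q₁ := ih Q₁ (by simp; try omega)
          have h₂ : TransAt Q₂ := ih Q₂ (by simp; try omega)
          have hn : NarrowAt Q₁ := narrow_of_trans Q₁ h₁
          have hb' : Subty ((Y, T₁) :: Γ') S₂ Q₂ := hn Γ' [] Y T₁ S₂ Q₂ hb hc
          exact .all (h₁ _ _ _ hc ha) (h₂ _ _ _ hb' hd)

theorem trans_all : ∀ Q : Ty, TransAt Q
  := fun Q => trans_step Q (fun Q' h => trans_all Q')
termination_by Q => sizeOf Q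
decreasing_by exact h

theorem sub_narrowing (Γ₁ Γ₂ : Env) (X : ℕ) (P Q M N : Ty)
    (h1 : Subty (Γ₂ ++ (X, Q) :: Γ₁) M N) (h2 : Subty Γ₁ P Q) :
    Subty (Γ₂ ++ (X, P) :: Γ₁) M N := by
  exact narrow_of_trans Q (trans_all Q) Γ₁ Γ₂ X P M N h1 h2
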